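/- arXiv:2302.09580 — 3 statements merged into one kernel-verified Lean document; each statement's English description precedes it below -/
import Mathlib

section
/- For σ_η > 0, τ_c > 0, ω₀ > 0, the integral (1/π)·∫₀^∞ σ_η²·τ_c² / (τ_c²·(ω² − ω₀²)² + ω²) dω equals σ_η²·τ_c / (2·ω₀²). -/
open MeasureTheory Set Filter Real

private lemma D_pos {τc ω0 : ℝ} (hτ : 0 < τc) (hω : 0 < ω0) (x : ℝ) :
    0 < τc ^ 2 * (x ^ 2 - ω0 ^ 2) ^ 2 + x ^ 2 := by
  rcases eq_or_ne x 0 with rfl | hx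
  · nlinarith [pow_pos hτ 2, pow_pos hω 4]
  · positivity

theorem ldho_variance (ση τc ω0 : ℝ)
    (hσ : 0 < ση) (hτ : 0 < τc) (hω : 0 < ω0) :
    (1 / Real.pi) *
      ∫ ω in Set.Ioi (0 : ℝ),
        ση ^ 2 * τc ^ 2 / (τc ^ 2 * (ω ^ 2 - ω0 ^ 2) ^ 2 + ω ^ 2)
      = ση ^ 2 * τc / (2 * ω0 ^ 2) := by
  have hτ' := hτ.ne'
  have hω' := hω.ne'
  set D : ℝ → ℝ := fun x => τc ^ 2 * (x ^ 2 - ω0 ^ 2) ^ 2 + x ^ 2 with hD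
  have hDpos : ∀ x, 0 < D x := D_pos hτ hω
  set p : ℝ → ℝ := fun x => (x ^ 2 + ω0 ^ 2) / D x with hp
  set q : ℝ → ℝ := fun x => (x ^ 2 - ω0 ^ 2) / D x with hq
  set A : ℝ → ℝ := fun x =>
    if 0 < x then Real.arctan (τc * (x - ω0 ^ 2 / x)) / τc else -(π / 2) / τc with hA
  -- derivative of A on Ioi 0 is p
  have hderiv : ∀ x ∈ Ioi (0 : ℝ), HasDerivAt A (p x) x := by
    intro x hx
    have hx0 : (0 : ℝ) < x := hx
    have h1 : HasDerivAt (fun y : ℝ => ω0 ^ 2 / y) (-(ω0 ^ 2 / x ^ 2)) x := by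
      simpa [div_eq_mul_inv, mul_comm, neg_div] using
        (hasDerivAt_inv hx0.ne').const_mul (ω0 ^ 2)
    have h2 : HasDerivAt (fun y : ℝ => τc * (y - ω0 ^ 2 / y))
        (τc * (1 - -(ω0 ^ 2 / x ^ 2))) x :=
      ((hasDerivAt_id x).sub h1).const_mul τc
    have h3 := (h2.arctan).div_const τc
    have heq : A =ᶠ[nhds x] fun y => Real.arctan (τc * (y - ω0 ^ 2 / y)) / τc := by
      filter_upwards [IsOpen.mem_nhds isOpen_Ioi hx] with y hy
      simp [hA, if_pos (show (0:ℝ) < y from hy)]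
    have h4 := h3.congr_of_eventuallyEq heq
    refine h4.congr_deriv ?_
    have hDx : D x ≠ 0 := (hDpos x).ne'
    have h1g : (0:ℝ) < 1 + (τc * (x - ω0 ^ 2 / x)) ^ 2 := by positivity
    rw [hp]
    simp only [hD] at hDx ⊢
    field_simp
    ring
  -- limit of A at infinity
  have hgtop : Tendsto (fun x : ℝ => τc * (x - ω0 ^ 2 / x)) atTop atTop := by
    apply Tendsto.const_mul_atTop hτ
    apply tendsto_atTop_mono' _ _ (tendsto_atTop_add_const_right _ (-(ω0 ^ 2)) tendsto_id)
    filter_upwards [eventually_ge_atTop (1:ℝ)] with x hx1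
    have hx0 : (0:ℝ) < x := lt_of_lt_of_le one_pos hx1
    have : ω0 ^ 2 / x ≤ ω0 ^ 2 := by
      rw [div_le_iff₀ hx0]; nlinarith [sq_nonneg ω0]
    simp only [id]
    linarith
  have htop : Tendsto A atTop (nhds (π / 2 / τc)) := by
    have h := ((Real.tendsto_arctan_atTop.mono_right nhdsWithin_le_nhds).comp hgtop).div_const τc
    apply h.congr'
    filter_upwards [eventually_gt_atTop (0:ℝ)] with x hx
    simp [hA, if_pos hx, Function.comp]
  -- continuity of A within Ici 0 at 0
  have hcont : ContinuousWithinAt A (Ici (0:ℝ)) 0 := by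
    rw [← Set.Ioi_insert]
    apply ContinuousWithinAt.insert
    have hgbot : Tendsto (fun x : ℝ => τc * (x - ω0 ^ 2 / x)) (nhdsWithin 0 (Ioi 0)) atBot := by
      apply Tendsto.const_mul_atBot hτ
      have h1 : Tendsto (fun x : ℝ => -(ω0 ^ 2 / x)) (nhdsWithin 0 (Ioi 0)) atBot := by
        apply tendsto_neg_atTop_atBot.comp
        exact ((tendsto_inv_nhdsGT_zero).const_mul_atTop (pow_pos hω 2)).congr fun x => (div_eq_mul_inv _ _).symm
      have h2 : Tendsto (fun x : ℝ => x) (nhdsWithin 0 (Ioi 0)) (nhds 0) :=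
        tendsto_id.mono_left nhdsWithin_le_nhds
      simpa [sub_eq_add_neg] using h2.add_atBot h1
    have h := ((Real.tendsto_arctan_atBot.mono_right nhdsWithin_le_nhds).comp hgbot).div_const τc
    have hA0 : A 0 = -(π / 2) / τc := by simp [hA]
    rw [ContinuousWithinAt, hA0]
    apply h.congr'
    filter_upwards [self_mem_nhdsWithin] with x hx
    simp [hA, if_pos (show (0:ℝ) < x from hx), Function.comp]
  have hpnonneg : ∀ x ∈ Ioi (0:ℝ), 0 ≤ p x := fun x _ =>
    div_nonneg (by positivity) (hDpos x).le
  -- integrability and value of ∫ p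
  have hpInt : IntegrableOn p (Ioi (0:ℝ)) :=
    integrableOn_Ioi_deriv_of_nonneg hcont hderiv hpnonneg htop
  have hIntp2 : ∫ x in Ioi (0:ℝ), p x = π / τc := by
    have h := integral_Ioi_of_hasDerivAt_of_tendsto hcont hderiv hpInt htop
    have hA0 : A 0 = -(π / 2) / τc := by simp [hA]
    rw [hA0] at h
    rw [h]; field_simp; ring
  -- q is continuous, integrable
  have hDcont : Continuous D := by
    rw [hD]
    exact (continuous_const.mul (((continuous_pow 2).sub continuous_const).pow 2)).add
      (continuous_pow 2)
  have hqcont : Continuous q := by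
    rw [hq]
    exact ((continuous_pow 2).sub continuous_const).div hDcont fun x => (hDpos x).ne'
  have hqInt : IntegrableOn q (Ioi (0:ℝ)) := by
    apply Integrable.mono hpInt hqcont.aestronglyMeasurable.restrict
    filter_upwards with x
    rw [hq, hp, norm_div, norm_div]
    gcongr
    rw [Real.norm_eq_abs, Real.norm_eq_abs,
      abs_of_nonneg (by positivity : (0:ℝ) ≤ x ^ 2 + ω0 ^ 2), abs_le]
    constructor <;> nlinarith [sq_nonneg x, sq_nonneg ω0]
  -- ∫ q = 0 by the substitution x ↦ ω0²/x
  have hqzero : ∫ x in Ioi (0:ℝ), q x = 0 := by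
    have hφderiv : ∀ x ∈ Ioi (0:ℝ),
        HasDerivWithinAt (fun y : ℝ => ω0 ^ 2 / y) (-(ω0 ^ 2 / x ^ 2)) (Ioi 0) x := by
      intro x hx
      have hx0 : (0:ℝ) < x := hx
      exact (by simpa [div_eq_mul_inv, mul_comm, neg_div] using
        (hasDerivAt_inv hx0.ne').const_mul (ω0 ^ 2) :
        HasDerivAt (fun y : ℝ => ω0 ^ 2 / y) (-(ω0 ^ 2 / x ^ 2)) x).hasDerivWithinAt
    have hinj : InjOn (fun y : ℝ => ω0 ^ 2 / y) (Ioi 0) := by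
      intro a ha b hb hab
      have ha0 : (0:ℝ) < a := ha
      have hb0 : (0:ℝ) < b := hb
      field_simp at hab
      nlinarith
    have himg : (fun y : ℝ => ω0 ^ 2 / y) '' Ioi 0 = Ioi (0:ℝ) := by
      ext y
      constructor
      · rintro ⟨x, hx, rfl⟩
        exact div_pos (pow_pos hω 2) hx
      · intro hy
        exact ⟨ω0 ^ 2 / y, div_pos (pow_pos hω 2) hy, by field_simp⟩
    have hsub := integral_image_eq_integral_abs_deriv_smul measurableSet_Ioi hφderiv hinj q
    rw [himg] at hsub
    have hpt : ∀ x ∈ Ioi (0:ℝ), |(-(ω0 ^ 2 / x ^ 2))| • q (ω0 ^ 2 / x) = -q x := by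
      intro x hx
      have hx0 : (0:ℝ) < x := hx
      have hDx : D x ≠ 0 := (hDpos x).ne'
      have hDval : D (ω0 ^ 2 / x) = ω0 ^ 4 / x ^ 4 * D x := by
        simp only [hD]
        field_simp
        ring
      rw [abs_neg, abs_of_pos (by positivity), smul_eq_mul, hq]
      simp only [hDval]
      simp only [hD] at hDx ⊢
      field_simp
      ring
    rw [setIntegral_congr_fun measurableSet_Ioi hpt, integral_neg] at hsub
    linarith
  -- put it together
  have hsplit : ∫ ω in Ioi (0:ℝ), ση ^ 2 * τc ^ 2 / D ω
      = (ση ^ 2 * τc ^ 2 / (2 * ω0 ^ 2)) * ((∫ x in Ioi (0:ℝ), p x) - ∫ x in Ioi (0:ℝ), q x) := by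
    rw [← integral_sub hpInt hqInt, ← integral_const_mul]
    apply setIntegral_congr_fun measurableSet_Ioi
    intro x _
    have hDx : D x ≠ 0 := (hDpos x).ne'
    rw [hp, hq]
    simp only [hD] at hDx ⊢
    field_simp
    ring
  rw [show (∫ ω in Set.Ioi (0:ℝ), ση ^ 2 * τc ^ 2 / (τc ^ 2 * (ω ^ 2 - ω0 ^ 2) ^ 2 + ω ^ 2))
      = ∫ ω in Ioi (0:ℝ), ση ^ 2 * τc ^ 2 / D ω from rfl, hsplit, hIntp2, hqzero]
  have hπ : Real.pi ≠ 0 := Real.pi_ne_zero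
  field_simp
  ring
end

section
/- For any a ∈ ℂ with Re(a) > 0 and any ν ∈ ℝ with ν > −1 and r > 0, the integral ∫₀^∞ k^{ν+1}·J_ν(r k)·exp(−a k²) dk equals r^ν/(2a)^{ν+1} · exp(−r²/(4a)), where J_ν is the Bessel function of the first kind of order ν. -/
open MeasureTheory Set Filter Complex
open scoped Real Topology

/-- Bessel function of the first kind of real order `ν`, defined by its power series. -/
noncomputable def besselJ (ν : ℝ) (x : ℝ) : ℝ :=
  ∑' m : ℕ, ((-1 : ℝ) ^ m / (m.factorial * Real.Gamma (m + ν + 1))) *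
    (x / 2) ^ (2 * (m : ℝ) + ν)

lemma contOn_cpow (c : ℂ) : ContinuousOn (fun t : ℝ => (t : ℂ) ^ c) (Ioi 0) :=
  fun x hx => (continuousAt_ofReal_cpow_const x c (Or.inr (ne_of_gt hx))).continuousWithinAt

lemma integrableOn_rpow_exp {s : ℝ} (hs : -1 < s) {b : ℝ} (hb : 0 < b) :
    IntegrableOn (fun t : ℝ => t ^ s * Real.exp (-b * t)) (Ioi 0) := by
  have := integrableOn_rpow_mul_exp_neg_mul_rpow (p := 1) hs one_pos hb
  exact this.congr_fun (fun x hx => by dsimp only; rw [Real.rpow_one]) measurableSet_Ioi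

lemma norm_cpow_mul_cexp {t : ℝ} (ht : 0 < t) (c z : ℂ) :
    ‖(t : ℂ) ^ c * Complex.exp (-z * t)‖ = t ^ c.re * Real.exp (-z.re * t) := by
  rw [norm_mul,
    Complex.norm_cpow_eq_rpow_re_of_pos ht, Complex.norm_exp]
  congr 2
  simp [Complex.neg_re, Complex.mul_re]

lemma integrableOn_cpow_mul_cexp {c : ℂ} (hc : -1 < c.re) {a : ℂ} (ha : 0 < a.re) :
    IntegrableOn (fun t : ℝ => (t : ℂ) ^ c * Complex.exp (-a * t)) (Ioi 0) := by
  refine (integrableOn_rpow_exp hc ha).mono' ?_ ?_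
  · exact ((contOn_cpow c).mul
      (Complex.continuous_exp.comp_continuousOn (by fun_prop))).aestronglyMeasurable
        measurableSet_Ioi
  · rw [ae_restrict_iff' measurableSet_Ioi]
    filter_upwards with t ht
    rw [norm_cpow_mul_cexp ht]


lemma integral_cpow_mul_cexp {s : ℂ} (hs : 0 < s.re) {a : ℂ} (ha : 0 < a.re) :
    ∫ t : ℝ in Ioi 0, (t : ℂ) ^ (s - 1) * Complex.exp (-a * t)
      = a ^ (-s) * Complex.Gamma s := by
  have hs' : -1 < (s - 1).re := by simp [Complex.sub_re]; linarith
  set f : ℂ → ℂ := fun b => ∫ t : ℝ in Ioi 0, (t : ℂ) ^ (s - 1) * Complex.exp (-b * t) with hfdef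
  set g : ℂ → ℂ := fun b => b ^ (-s) * Complex.Gamma s with hgdef
  set U : Set ℂ := {z : ℂ | 0 < z.re} with hUdef
  have hU : IsOpen U := isOpen_lt continuous_const Complex.continuous_re
  -- differentiability of f
  have hfd : DifferentiableOn ℂ f U := by
    intro b hb
    have hb' : 0 < b.re := hb
    have hε0 : 0 < b.re / 2 := by positivity
    have key := hasDerivAt_integral_of_dominated_loc_of_deriv_le
      (μ := volume.restrict (Ioi 0)) (𝕜 := ℂ)
      (F := fun (z : ℂ) (t : ℝ) => (t : ℂ) ^ (s - 1) * Complex.exp (-z * t))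
      (F' := fun (z : ℂ) (t : ℝ) => (t : ℂ) ^ (s - 1) * (-t * Complex.exp (-z * t)))
      (x₀ := b) (bound := fun t : ℝ => t ^ s.re * Real.exp (-(b.re / 2) * t)) (Metric.ball_mem_nhds _ hε0)
      ?_ ?_ ?_ ?_ ?_ ?_
    · exact key.2.differentiableAt.differentiableWithinAt
    · filter_upwards with z
      exact ((contOn_cpow (s - 1)).mul
        (Complex.continuous_exp.comp_continuousOn (by fun_prop))).aestronglyMeasurable
          measurableSet_Ioi
    · exact integrableOn_cpow_mul_cexp hs' hb'
    · exact ((contOn_cpow (s - 1)).mul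
        ((by fun_prop : Continuous fun t : ℝ => -(t:ℂ) * Complex.exp (-b * t)).continuousOn)).aestronglyMeasurable
          measurableSet_Ioi
    · rw [ae_restrict_iff' measurableSet_Ioi]
      filter_upwards with t ht z hz
      have h1 : ‖(t : ℂ) ^ (s - 1) * (-t * Complex.exp (-z * t))‖
          = t ^ s.re * Real.exp (-z.re * t) := by
        rw [show (t : ℂ) ^ (s - 1) * (-t * Complex.exp (-z * t))
            = -((t:ℂ) ^ (s-1) * t * Complex.exp (-z * t)) by ring, norm_neg,
          show (t:ℂ) ^ (s-1) * t = (t:ℂ) ^ s by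
            nth_rewrite 2 [show (t:ℂ) = (t:ℂ) ^ (1:ℂ) by rw [Complex.cpow_one]]
            rw [← Complex.cpow_add _ _ (by exact_mod_cast ne_of_gt ht)]
            norm_num,
          norm_cpow_mul_cexp ht]
      rw [h1]
      have hzre : b.re / 2 ≤ z.re := by
        have := Complex.abs_re_le_norm (z - b)
        rw [Metric.mem_ball, Complex.dist_eq] at hz
        have : |z.re - b.re| < b.re / 2 := by
          simpa [Complex.sub_re] using lt_of_le_of_lt this hz
        have := abs_lt.mp this
        linarith [this.1]
      have : Real.exp (-z.re * t) ≤ Real.exp (-(b.re / 2) * t) := by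
        apply Real.exp_le_exp.mpr
        nlinarith [(show (0:ℝ) < t from ht).le]
      have h2 : 0 ≤ t ^ s.re := Real.rpow_nonneg (show (0:ℝ) < t from ht).le _
      nlinarith [this]
    · exact integrableOn_rpow_exp (by linarith) hε0
    · filter_upwards with t z hz
      have : HasDerivAt (fun z : ℂ => -z * t) (-t) z := by
        simpa using ((hasDerivAt_id z).neg.mul_const (t : ℂ))
      have := (this.cexp).const_mul ((t : ℂ) ^ (s - 1))
      exact this.congr_deriv (by ring)
  -- differentiability of g
  have hgd : DifferentiableOn ℂ g U := by
    intro b hb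
    exact ((differentiableAt_id.cpow (differentiableAt_const _)
      (Or.inl hb)).mul_const _).differentiableWithinAt
  -- equality on positive reals
  have hreal : ∀ x : ℝ, 0 < x → f x = g x := by
    intro x hx
    have h := Complex.integral_cpow_mul_exp_neg_mul_Ioi hs hx
    simp only [hfdef, hgdef, neg_mul]
    rw [h, one_div, Complex.inv_cpow _ _ (by
        rw [Complex.arg_ofReal_of_nonneg hx.le]; exact Real.pi_ne_zero.symm),
      ← Complex.cpow_neg]
  have heq : EqOn f g U := by
    have h1U : (1 : ℂ) ∈ U := by simp [hUdef]
    refine (hfd.analyticOnNhd hU).eqOn_of_preconnected_of_frequently_eq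
      (hgd.analyticOnNhd hU) ((convex_halfSpace_re_gt 0).isPreconnected) h1U ?_
    have htend : Tendsto (fun n : ℕ => ((1 + ((n : ℝ) + 1)⁻¹ : ℝ) : ℂ)) atTop (𝓝[≠] 1) := by
      rw [tendsto_nhdsWithin_iff]
      constructor
      · have : Tendsto (fun n : ℕ => (1 + ((n : ℝ) + 1)⁻¹ : ℝ)) atTop (𝓝 1) := by
          have h := (tendsto_const_nhds (x := (1:ℝ))).add tendsto_one_div_add_atTop_nhds_zero_nat
          simpa [one_div] using h
        exact (Complex.continuous_ofReal.tendsto 1).comp this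
      · filter_upwards with n
        simp only [mem_compl_iff, mem_singleton_iff]
        intro h
        have : (1 + ((n : ℝ) + 1)⁻¹ : ℝ) = 1 := by exact_mod_cast h
        have : ((n : ℝ) + 1)⁻¹ = 0 := by linarith
        simp at this
        linarith [this]
    refine htend.frequently (Eventually.frequently (Filter.Eventually.of_forall fun n => ?_))
    exact hreal _ (by positivity)
  have := heq (show a ∈ U from ha)
  simpa [hfdef, hgdef] using this


lemma gaussian_moment {p : ℝ} (hp : 0 < p) {a : ℂ} (ha : 0 < a.re) :
    ∫ k : ℝ in Ioi 0, ((k ^ (2 * p - 1) : ℝ) : ℂ) * Complex.exp (-a * (k:ℂ) ^ 2)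
      = a ^ (-(p:ℂ)) * ((Real.Gamma p : ℝ) : ℂ) / 2 := by
  have key := integral_comp_rpow_Ioi_of_pos
    (g := fun t : ℝ => ((2:ℝ))⁻¹ • (((t ^ (p - 1) : ℝ) : ℂ) * Complex.exp (-a * t)))
    (p := 2) two_pos
  refine Eq.trans ?_ (key.trans ?_)
  · refine setIntegral_congr_fun measurableSet_Ioi (fun x hx => ?_)
    have hx0 : (0:ℝ) < x := hx
    have h1 : (x ^ (2:ℝ)) ^ (p - 1) = x ^ (2 * (p - 1)) := (Real.rpow_mul hx0.le _ _).symm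
    have h2 : x * x ^ (2 * (p - 1)) = x ^ (2 * p - 1) := by
      rw [show x * x ^ (2 * (p - 1)) = x ^ (1:ℝ) * x ^ (2 * (p - 1)) by rw [Real.rpow_one],
        ← Real.rpow_add hx0]
      ring_nf
    have h3 : x ^ (2:ℝ) = x ^ (2:ℕ) := by
      rw [← Real.rpow_natCast x 2]; norm_num
    have h4 : (2 * x ^ ((2:ℝ) - 1) * (2:ℝ)⁻¹ : ℝ) = x := by
      rw [show ((2:ℝ) - 1) = (1:ℝ) by norm_num, Real.rpow_one]; ring
    rw [h1, h3, smul_smul, Complex.real_smul, h4, ← h2]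
    push_cast
    ring
  · rw [integral_smul]
    have h5 : (∫ t : ℝ in Ioi 0, ((t ^ (p - 1) : ℝ) : ℂ) * Complex.exp (-a * t))
        = a ^ (-(p:ℂ)) * Complex.Gamma p := by
      rw [← integral_cpow_mul_cexp (s := (p:ℂ)) (by simpa using hp) ha]
      refine setIntegral_congr_fun measurableSet_Ioi (fun t ht => ?_)
      congr 1
      rw [Complex.ofReal_cpow (le_of_lt ht)]
      push_cast
      ring_nf
    rw [h5, Complex.Gamma_ofReal]
    push_cast
    field_simp
    rw [Complex.real_smul]
    push_cast
    ring


lemma gaussian_moment_real {p : ℝ} (hp : 0 < p) {b : ℝ} (hb : 0 < b) :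
    ∫ k : ℝ in Ioi 0, k ^ (2 * p - 1) * Real.exp (-b * k ^ 2)
      = b ^ (-p) * Real.Gamma p / 2 := by
  have h := gaussian_moment hp (a := (b:ℂ)) (by simpa using hb)
  rw [← Complex.ofReal_inj]
  calc ((∫ k : ℝ in Ioi 0, k ^ (2 * p - 1) * Real.exp (-b * k ^ 2) : ℝ) : ℂ)
      = ∫ k : ℝ in Ioi 0, ((k ^ (2 * p - 1) : ℝ) : ℂ) * Complex.exp (-(b:ℂ) * (k:ℂ) ^ 2) := by
        rw [show ((∫ k : ℝ in Ioi 0, k ^ (2 * p - 1) * Real.exp (-b * k ^ 2) : ℝ) : ℂ)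
            = ∫ k : ℝ in Ioi 0, ((k ^ (2 * p - 1) * Real.exp (-b * k ^ 2) : ℝ) : ℂ) from
          integral_ofReal.symm]
        refine setIntegral_congr_fun measurableSet_Ioi (fun k _ => ?_)
        push_cast [Complex.ofReal_exp]
        ring_nf
    _ = (b:ℂ) ^ (-(p:ℂ)) * ((Real.Gamma p : ℝ) : ℂ) / 2 := h
    _ = ((b ^ (-p) * Real.Gamma p / 2 : ℝ) : ℂ) := by
        push_cast [Complex.ofReal_cpow hb.le]
        ring

lemma integrableOn_rpow_mul_cexp_sq {s : ℝ} (hs : -1 < s) {a : ℂ} (ha : 0 < a.re) :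
    IntegrableOn (fun k : ℝ => ((k ^ s : ℝ) : ℂ) * Complex.exp (-a * (k:ℂ) ^ 2)) (Ioi 0) := by
  refine (integrableOn_rpow_mul_exp_neg_mul_sq ha hs).mono' ?_ ?_
  · refine ContinuousOn.aestronglyMeasurable ?_ measurableSet_Ioi
    refine ContinuousOn.mul ?_ (Continuous.continuousOn (by fun_prop))
    refine Complex.continuous_ofReal.comp_continuousOn ?_
    intro x hx
    exact (Real.continuousAt_rpow_const x s (Or.inl (ne_of_gt hx))).continuousWithinAt
  · rw [ae_restrict_iff' measurableSet_Ioi]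
    filter_upwards with k hk
    rw [norm_mul, Complex.norm_real, Real.norm_eq_abs,
      Complex.norm_exp, _root_.abs_of_nonneg (Real.rpow_nonneg hk.le _)]
    have : (-a * (k:ℂ) ^ 2).re = -a.re * k ^ 2 := by
      rw [show ((k:ℂ)) ^ 2 = ((k ^ 2 : ℝ) : ℂ) by norm_cast, neg_mul,
        Complex.neg_re, Complex.mul_re, Complex.ofReal_re, Complex.ofReal_im]
      ring
    rw [this]


lemma ofReal_mul_cpow {r : ℝ} (hr : 0 < r) {x : ℂ} (hx : x ≠ 0) (s : ℂ) :
    ((r : ℂ) * x) ^ s = (r : ℂ) ^ s * x ^ s := by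
  have hr' : (r : ℂ) ≠ 0 := Complex.ofReal_ne_zero.mpr hr.ne'
  rw [Complex.cpow_def_of_ne_zero (mul_ne_zero hr' hx),
    Complex.log_ofReal_mul hr hx, add_mul, Complex.exp_add,
    ← Complex.cpow_def_of_ne_zero hx, Complex.cpow_def_of_ne_zero hr',
    Complex.ofReal_log hr.le]

set_option maxHeartbeats 2000000 in
theorem hankel_gaussian_integral (a : ℂ) (ha : 0 < a.re) (ν : ℝ) (hν : -1 < ν)
    (r : ℝ) (hr : 0 < r) :
    ∫ k in Set.Ioi (0 : ℝ),
        (k : ℂ) ^ (ν + 1 : ℂ) * (besselJ ν (r * k) : ℂ) * Complex.exp (-a * k ^ 2)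
      = (r : ℂ) ^ (ν : ℂ) / (2 * a) ^ (ν + 1 : ℂ) *
          Complex.exp (-(r : ℂ) ^ 2 / (4 * a)) := by
  have ha0 : a ≠ 0 := fun h => by simp [h] at ha
  have hb : 0 < a.re := ha
  set b : ℝ := a.re with hbdef
  -- coefficients
  set c : ℕ → ℝ := fun m => (-1 : ℝ) ^ m / (m.factorial * Real.Gamma ((m : ℝ) + ν + 1))
    with hcdef
  have hΓpos : ∀ m : ℕ, 0 < Real.Gamma ((m : ℝ) + ν + 1) := fun m =>
    Real.Gamma_pos_of_pos (by have := Nat.cast_nonneg (α := ℝ) m; linarith)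
  have hp : ∀ m : ℕ, 0 < (m : ℝ) + ν + 1 := fun m => by
    have := Nat.cast_nonneg (α := ℝ) m; linarith
  set F : ℕ → ℝ → ℂ := fun m k =>
    ((c m * (r * k / 2) ^ (2 * (m : ℝ) + ν) * k ^ (ν + 1) : ℝ) : ℂ)
      * Complex.exp (-a * (k:ℂ) ^ 2) with hFdef
  -- pointwise equality with the series on Ioi 0
  have hEq : ∀ k ∈ Ioi (0:ℝ),
      (k : ℂ) ^ (ν + 1 : ℂ) * (besselJ ν (r * k) : ℂ) * Complex.exp (-a * (k:ℂ) ^ 2)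
        = ∑' m, F m k := by
    intro k hk
    have hk0 : (0:ℝ) < k := hk
    have h1 : ∑' m, F m k
        = (∑' m, ((c m * (r * k / 2) ^ (2 * (m : ℝ) + ν) : ℝ) : ℂ))
            * (((k ^ (ν + 1) : ℝ) : ℂ) * Complex.exp (-a * (k:ℂ) ^ 2)) := by
      rw [← tsum_mul_right]
      refine tsum_congr fun m => ?_
      simp only [hFdef]
      push_cast
      ring
    rw [h1, ← Complex.ofReal_tsum]
    have h2 : (besselJ ν (r * k) : ℝ)
        = ∑' m, (c m * (r * k / 2) ^ (2 * (m : ℝ) + ν) : ℝ) := rfl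
    rw [← h2, Complex.ofReal_cpow hk0.le]
    push_cast
    ring
  rw [setIntegral_congr_fun measurableSet_Ioi hEq]
  -- on Ioi 0, F m equals a constant multiple of a gaussian moment integrand
  have hFeq : ∀ m : ℕ, ∀ k ∈ Ioi (0:ℝ), F m k
      = ((c m * (r / 2) ^ (2 * (m : ℝ) + ν) : ℝ) : ℂ)
          * (((k ^ (2 * ((m:ℝ) + ν + 1) - 1) : ℝ) : ℂ) * Complex.exp (-a * (k:ℂ) ^ 2)) := by
    intro m k hk
    have hk0 : (0:ℝ) < k := hk
    have e1 : (r * k / 2) ^ (2 * (m : ℝ) + ν) = (r / 2) ^ (2 * (m : ℝ) + ν) * k ^ (2 * (m : ℝ) + ν) := by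
      rw [show r * k / 2 = (r / 2) * k by ring, Real.mul_rpow (by positivity) hk0.le]
    have e2 : k ^ (2 * (m : ℝ) + ν) * k ^ (ν + 1) = k ^ (2 * ((m:ℝ) + ν + 1) - 1) := by
      rw [← Real.rpow_add hk0]
      ring_nf
    have e3 : c m * (r * k / 2) ^ (2 * (m : ℝ) + ν) * k ^ (ν + 1)
        = c m * (r / 2) ^ (2 * (m : ℝ) + ν) * k ^ (2 * ((m:ℝ) + ν + 1) - 1) := by
      rw [e1, ← e2]; ring
    rw [hFdef]
    simp only
    rw [e3]
    simp only [Complex.ofReal_mul]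
    ring
  -- integrability
  have hexps : ∀ m : ℕ, (-1:ℝ) < 2 * ((m:ℝ) + ν + 1) - 1 := fun m => by
    have := hp m; linarith
  have hFint : ∀ m : ℕ, IntegrableOn (F m) (Ioi 0) := by
    intro m
    exact IntegrableOn.congr_fun
      ((integrableOn_rpow_mul_cexp_sq (hexps m) ha).const_mul _)
      (fun k hk => (hFeq m k hk).symm) measurableSet_Ioi
  -- the norms of the integrals
  have hnorm : ∀ m : ℕ, (∫ k in Ioi 0, ‖F m k‖)
      = |c m| * (r / 2) ^ (2 * (m : ℝ) + ν)
          * (b ^ (-((m:ℝ) + ν + 1)) * Real.Gamma ((m:ℝ) + ν + 1) / 2) := by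
    intro m
    have : ∀ k ∈ Ioi (0:ℝ), ‖F m k‖
        = |c m| * (r / 2) ^ (2 * (m : ℝ) + ν)
            * (k ^ (2 * ((m:ℝ) + ν + 1) - 1) * Real.exp (-b * k ^ 2)) := by
      intro k hk
      have hk0 : (0:ℝ) < k := hk
      rw [hFeq m k hk, norm_mul, norm_mul, Complex.norm_real, Real.norm_eq_abs,
        Complex.norm_real, Real.norm_eq_abs, Complex.norm_exp]
      have hre : (-a * (k:ℂ) ^ 2).re = -b * k ^ 2 := by
        rw [show ((k:ℂ)) ^ 2 = ((k ^ 2 : ℝ) : ℂ) by norm_cast, neg_mul, Complex.neg_re,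
          Complex.mul_re, Complex.ofReal_re, Complex.ofReal_im]
        simp [hbdef]
      rw [hre, abs_mul, _root_.abs_of_nonneg (Real.rpow_nonneg (by positivity) _),
        _root_.abs_of_nonneg (Real.rpow_nonneg hk0.le _)]
    rw [setIntegral_congr_fun measurableSet_Ioi this, integral_const_mul,
      gaussian_moment_real (hp m) hb]
  -- summability of the integral norms
  have hsum : Summable fun m : ℕ => ∫ k in Ioi 0, ‖F m k‖ := by
    have key : Summable fun m : ℕ =>
        ((r / 2) ^ ν * b ^ (-(ν + 1)) / 2) * (((r / 2) ^ 2 / b) ^ m / m.factorial) :=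
      (Real.summable_pow_div_factorial _).mul_left _
    refine key.congr fun m => ?_
    rw [hnorm m]
    have habs : |c m| = 1 / (m.factorial * Real.Gamma ((m : ℝ) + ν + 1)) := by
      rw [hcdef]
      simp only [abs_div, _root_.abs_pow, abs_neg, abs_one, one_pow]
      rw [_root_.abs_of_pos (mul_pos (Nat.cast_pos.mpr m.factorial_pos) (hΓpos m))]
    have hpow : ((r/2) ^ (2 * (m:ℝ) + ν) : ℝ) = (r/2) ^ ν * ((r/2) ^ 2) ^ m := by
      rw [show (2 * (m:ℝ) + ν) = ((2 * m : ℕ) : ℝ) + ν by push_cast; ring,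
        Real.rpow_add (by positivity), Real.rpow_natCast, pow_mul]
      ring
    have hbpow : b ^ (-((m:ℝ) + ν + 1)) = b ^ (-(ν+1)) * (b ^ m)⁻¹ := by
      rw [show -((m:ℝ) + ν + 1) = -(ν + 1) + -(m:ℝ) by ring, Real.rpow_add hb]
      congr 1
      rw [Real.rpow_neg hb.le, Real.rpow_natCast]
    rw [habs, hpow, hbpow, div_pow]
    have h1 : Real.Gamma ((m : ℝ) + ν + 1) ≠ 0 := (hΓpos m).ne'
    have h2 : (m.factorial : ℝ) ≠ 0 := Nat.cast_ne_zero.mpr m.factorial_ne_zero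
    have h3 : (b : ℝ) ^ m ≠ 0 := pow_ne_zero _ hb.ne'
    field_simp
  -- interchange sum and integral
  rw [← integral_tsum_of_summable_integral_norm hFint hsum]
  -- evaluate each integral
  have hterm : ∀ m : ℕ, (∫ k in Ioi 0, F m k)
      = (((r/2) ^ ν : ℝ) : ℂ) * (a ^ ((ν:ℂ) + 1))⁻¹ / 2
          * (((-1 : ℂ) * ((((r/2)^2 : ℝ)) : ℂ) / a) ^ m / m.factorial) := by
    intro m
    rw [setIntegral_congr_fun measurableSet_Ioi (hFeq m), integral_const_mul,
      gaussian_moment (hp m) ha]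
    have hcpow : a ^ (-((((m:ℝ) + ν + 1) : ℝ) : ℂ)) = (a ^ ((ν:ℂ)+1))⁻¹ * ((a ^ m : ℂ))⁻¹ := by
      rw [show -((((m:ℝ) + ν + 1) : ℝ) : ℂ) = (-((ν:ℂ)+1)) + (-(m:ℂ)) by push_cast; ring,
        Complex.cpow_add _ _ ha0, Complex.cpow_neg, Complex.cpow_neg, Complex.cpow_natCast]
    have hpow : ((r/2) ^ (2 * (m:ℝ) + ν) : ℝ) = (r/2) ^ ν * ((r/2) ^ 2) ^ m := by
      rw [show (2 * (m:ℝ) + ν) = ((2 * m : ℕ) : ℝ) + ν by push_cast; ring,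
        Real.rpow_add (by positivity), Real.rpow_natCast, pow_mul]
      ring
    rw [hcpow]
    have hcreal : c m * (r/2) ^ (2 * (m:ℝ) + ν) * Real.Gamma ((m:ℝ) + ν + 1)
        = (-1 : ℝ) ^ m / m.factorial * ((r/2) ^ ν * ((r/2) ^ 2) ^ m) := by
      rw [hcdef]
      simp only
      rw [hpow]
      field_simp [(hΓpos m).ne', Nat.cast_ne_zero.mpr m.factorial_ne_zero]
    have h3 : (a ^ m : ℂ) ≠ 0 := pow_ne_zero _ ha0
    have h4 : (a ^ ((ν:ℂ)+1)) ≠ 0 := by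
      rw [Complex.cpow_def_of_ne_zero ha0]
      exact Complex.exp_ne_zero _
    calc (((c m * (r/2) ^ (2 * (m:ℝ) + ν) : ℝ)) : ℂ)
          * ((a ^ ((ν:ℂ)+1))⁻¹ * ((a ^ m : ℂ))⁻¹ * ((Real.Gamma ((m:ℝ) + ν + 1) : ℝ) : ℂ) / 2)
        = (((c m * (r/2) ^ (2 * (m:ℝ) + ν) * Real.Gamma ((m:ℝ) + ν + 1) : ℝ)) : ℂ)
            * ((a ^ ((ν:ℂ)+1))⁻¹ * ((a ^ m : ℂ))⁻¹ / 2) := by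
          push_cast
          ring
      _ = (((( -1 : ℝ) ^ m / m.factorial * ((r/2) ^ ν * ((r/2) ^ 2) ^ m) : ℝ)) : ℂ)
            * ((a ^ ((ν:ℂ)+1))⁻¹ * ((a ^ m : ℂ))⁻¹ / 2) := by
          rw [hcreal]
      _ = (((r/2) ^ ν : ℝ) : ℂ) * (a ^ ((ν:ℂ) + 1))⁻¹ / 2
            * (((-1 : ℂ) * ((((r/2)^2 : ℝ)) : ℂ) / a) ^ m / m.factorial) := by
          push_cast
          have h2 : ((m.factorial : ℝ) : ℂ) ≠ 0 :=
            Complex.ofReal_ne_zero.mpr (Nat.cast_ne_zero.mpr m.factorial_ne_zero)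
          field_simp
          have ham : a ^ m * (-((r:ℂ) ^ 2 / (2 ^ 2 * a))) ^ m = (-1) ^ m * ((r:ℂ) ^ 2 / 2 ^ 2) ^ m := by
            rw [← mul_pow, ← mul_pow]; congr 1; field_simp
          rw [mul_assoc _ (a ^ m), ham]
          ring
  rw [tsum_congr hterm, tsum_mul_left]
  have harg : (-1 : ℂ) * ((((r/2)^2 : ℝ)) : ℂ) / a = -(r:ℂ)^2 / (4 * a) := by
    rw [show ((((r/2)^2 : ℝ)) : ℂ) = (r:ℂ)^2/4 by push_cast; ring]
    ring
  have hexp : ∑' m : ℕ, (((-1 : ℂ) * ((((r/2)^2 : ℝ)) : ℂ) / a) ^ m / (m.factorial : ℂ))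
      = Complex.exp (-(r:ℂ)^2 / (4 * a)) := by
    rw [harg, Complex.exp_eq_exp_ℂ, NormedSpace.exp_eq_tsum_div]
  rw [hexp]
  have h4 : (a ^ ((ν:ℂ)+1)) ≠ 0 := by
    rw [Complex.cpow_def_of_ne_zero ha0]
    exact Complex.exp_ne_zero _
  have h2a : (2 * a) ^ ((ν:ℂ) + 1) = (2:ℂ) ^ ((ν:ℂ) + 1) * a ^ ((ν:ℂ) + 1) := by
    rw [show ((2:ℂ)) = (((2:ℝ)):ℂ) by norm_num, ofReal_mul_cpow two_pos ha0]
  have h2c : ((2:ℂ)) ^ ((ν:ℂ) + 1) = (2:ℂ) ^ (ν:ℂ) * 2 := by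
    rw [Complex.cpow_add _ _ two_ne_zero, Complex.cpow_one]
  have hrν : ((((r/2) ^ ν : ℝ)) : ℂ) = (r:ℂ) ^ (ν:ℂ) / (2:ℂ) ^ (ν:ℂ) := by
    rw [Real.div_rpow hr.le (by norm_num), Complex.ofReal_div, Complex.ofReal_cpow hr.le,
      Complex.ofReal_cpow (by norm_num : (0:ℝ) ≤ 2)]
    norm_num
  have h2ν : ((2:ℂ)) ^ (ν:ℂ) ≠ 0 := by
    rw [Complex.cpow_def_of_ne_zero two_ne_zero]
    exact Complex.exp_ne_zero _
  rw [h2a, h2c, hrν]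
  field_simp
end

section
/- Let d ≥ 1 and let C : [0,∞) → ℝ be a function such that for every n and every set of points in ℝ^d, the matrix [C(‖xᵢ−xⱼ‖)] is positive semidefinite (i.e., C(‖·‖) is an isotropic covariance kernel on ℝ^d). Then C(u) ≥ −C(0)/d for all u ≥ 0. -/
theorem isotropic_covariance_lower_bound (d : ℕ) (hd : 1 ≤ d) (C : ℝ → ℝ)
    (hpsd : ∀ (n : ℕ) (x : Fin n → EuclideanSpace ℝ (Fin d)),
      Matrix.PosSemidef (Matrix.of fun i j => C ‖x i - x j‖)) :
    ∀ u : ℝ, 0 ≤ u → C u ≥ -C 0 / d := by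
  intro u hu
  have hd0 : (0:ℝ) < d := by exact_mod_cast hd
  set a : ℝ := u / Real.sqrt 2 with ha_def
  have ha : 0 ≤ a := div_nonneg hu (Real.sqrt_nonneg 2)
  set s : ℝ := Real.sqrt (d+1) with hs_def
  have hs : s^2 = d+1 := Real.sq_sqrt (by positivity)
  set t : ℝ := (1+s)/d with ht_def
  have hkey : d * t^2 - 2*t + 1 = 2 := by
    have : (d:ℝ) ≠ 0 := ne_of_gt hd0
    rw [ht_def]
    field_simp
    nlinarith [hs]
  set x : Fin (d+1) → EuclideanSpace ℝ (Fin d) := fun i =>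
    WithLp.toLp 2 (fun k => if (i:ℕ) = d then t*a else if (k:ℕ) = (i:ℕ) then a else 0) with hx_def
  -- sum of squares of coordinates of x i - x j is 2a² for i ≠ j
  have hsum : ∀ i j : Fin (d+1), i ≠ j →
      ∑ k : Fin d, ((x i - x j) k)^2 = 2*a^2 := by
    intro i j hij
    have hij' : (i:ℕ) ≠ (j:ℕ) := fun h => hij (Fin.ext h)
    have hcoord : ∀ k : Fin d, (x i - x j) k = x i k - x j k := fun k => rfl
    by_cases hi : (i:ℕ) = d
    · -- then (j:ℕ) < d
      have hj : (j:ℕ) < d := by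
        have := j.isLt
        omega
      set j' : Fin d := ⟨(j:ℕ), hj⟩ with hj'
      have hjd : (j:ℕ) ≠ d := by omega
      have : ∀ k : Fin d, ((x i - x j) k)^2
          = (t*a)^2 + (if k = j' then (a - t*a)^2 - (t*a)^2 else 0) := by
        intro k
        rw [hcoord]
        simp only [hx_def, PiLp.toLp_apply, hi, hjd, if_true, if_false]
        by_cases hk : k = j'
        · have : (k:ℕ) = (j:ℕ) := by rw [hk]
          simp [hk, this, hj']
          ring
        · have : (k:ℕ) ≠ (j:ℕ) := by
            intro h; exact hk (Fin.ext h)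
          simp [hk, this]
      rw [Finset.sum_congr rfl (fun k _ => this k)]
      rw [Finset.sum_add_distrib, Finset.sum_ite_eq' Finset.univ j']
      simp only [Finset.sum_const, Finset.card_univ, Fintype.card_fin,
        Finset.mem_univ, if_true, nsmul_eq_mul]
      nlinarith [hkey]
    · by_cases hjd : (j:ℕ) = d
      · have hi' : (i:ℕ) < d := by have := i.isLt; omega
        set i' : Fin d := ⟨(i:ℕ), hi'⟩ with hi'd
        have : ∀ k : Fin d, ((x i - x j) k)^2
            = (t*a)^2 + (if k = i' then (a - t*a)^2 - (t*a)^2 else 0) := by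
          intro k
          rw [hcoord]
          simp only [hx_def, PiLp.toLp_apply, hi, hjd, if_true, if_false]
          by_cases hk : k = i'
          · have : (k:ℕ) = (i:ℕ) := by rw [hk]
            simp [hk, this, hi'd]
            try ring
          · have : (k:ℕ) ≠ (i:ℕ) := by
              intro h; exact hk (Fin.ext h)
            simp [hk, this]
        rw [Finset.sum_congr rfl (fun k _ => this k)]
        rw [Finset.sum_add_distrib, Finset.sum_ite_eq' Finset.univ i']
        simp only [Finset.sum_const, Finset.card_univ, Fintype.card_fin,
          Finset.mem_univ, if_true, nsmul_eq_mul]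
        nlinarith [hkey]
      · -- both < d, distinct
        have hi' : (i:ℕ) < d := by have := i.isLt; omega
        have hj' : (j:ℕ) < d := by have := j.isLt; omega
        set i' : Fin d := ⟨(i:ℕ), hi'⟩ with hi'd
        set j' : Fin d := ⟨(j:ℕ), hj'⟩ with hj'd
        have hij'' : i' ≠ j' := by
          intro h
          apply hij'
          have := congrArg Fin.val h
          simpa using this
        have : ∀ k : Fin d, ((x i - x j) k)^2
            = (if k = i' then a^2 else 0) + (if k = j' then a^2 else 0) := by
          intro k
          rw [hcoord]
          simp only [hx_def, PiLp.toLp_apply, hi, hjd, if_false]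
          by_cases hk1 : k = i'
          · have h1 : (k:ℕ) = (i:ℕ) := by rw [hk1]
            have h2 : (k:ℕ) ≠ (j:ℕ) := by rw [h1]; exact hij'
            have hk2 : k ≠ j' := by rw [hk1]; exact hij''
            simp [hk1, hk2, h1, h2, hij', hij'', hi'd, hj'd]
          · have h1 : (k:ℕ) ≠ (i:ℕ) := fun h => hk1 (Fin.ext h)
            by_cases hk2 : k = j'
            · have h2 : (k:ℕ) = (j:ℕ) := by rw [hk2]
              simp [hk1, hk2, h1, h2, Ne.symm hij', hij''.symm, hi'd, hj'd]
            · have h2 : (k:ℕ) ≠ (j:ℕ) := fun h => hk2 (Fin.ext h)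
              simp [hk1, hk2, h1, h2]
        rw [Finset.sum_congr rfl (fun k _ => this k)]
        rw [Finset.sum_add_distrib, Finset.sum_ite_eq' Finset.univ i',
          Finset.sum_ite_eq' Finset.univ j']
        simp only [Finset.mem_univ, if_true]
        ring
  -- hence all pairwise distances equal u
  have hnorm : ∀ i j : Fin (d+1), i ≠ j → ‖x i - x j‖ = u := by
    intro i j hij
    rw [EuclideanSpace.norm_eq]
    have : ∀ k : Fin d, ‖(x i - x j) k‖^2 = ((x i - x j) k)^2 := by
      intro k; rw [Real.norm_eq_abs, sq_abs]
    rw [Finset.sum_congr rfl (fun k _ => this k), hsum i j hij]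
    rw [show 2*a^2 = (Real.sqrt 2 * a)^2 by
      rw [mul_pow, Real.sq_sqrt (by norm_num : (0:ℝ) ≤ 2)]]
    rw [Real.sqrt_sq (by positivity)]
    rw [ha_def]
    field_simp
  have hM := (hpsd (d+1) x).dotProduct_mulVec_nonneg (fun _ => 1)
  have hexp : dotProduct (star fun _ : Fin (d+1) => (1:ℝ))
      ((Matrix.of fun i j => C ‖x i - x j‖).mulVec fun _ => (1:ℝ))
      = ∑ i : Fin (d+1), ∑ j : Fin (d+1), C ‖x i - x j‖ := by
    simp [dotProduct, Matrix.mulVec]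
  rw [hexp] at hM
  have hentry : ∀ i j : Fin (d+1), C ‖x i - x j‖ = if i = j then C 0 else C u := by
    intro i j
    by_cases h : i = j
    · simp [h]
    · rw [hnorm i j h]; simp [h]
  have hsum2 : ∑ i : Fin (d+1), ∑ j : Fin (d+1), C ‖x i - x j‖
      = (d+1) * C 0 + (d+1) * d * C u := by
    have : ∀ i : Fin (d+1), ∑ j : Fin (d+1), C ‖x i - x j‖ = C 0 + d * C u := by
      intro i
      rw [Finset.sum_congr rfl (fun j _ => hentry i j)]
      have : ∀ j : Fin (d+1), (if i = j then C 0 else C u)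
          = C u + (if j = i then C 0 - C u else 0) := by
        intro j
        by_cases h : i = j
        · simp [h]
        · have h'' : j ≠ i := fun hh => h hh.symm
          simp [h, h'']
      rw [Finset.sum_congr rfl (fun j _ => this j)]
      rw [Finset.sum_add_distrib, Finset.sum_ite_eq' Finset.univ i]
      simp only [Finset.sum_const, Finset.card_univ, Fintype.card_fin,
        Finset.mem_univ, if_true, nsmul_eq_mul]
      push_cast
      ring
    rw [Finset.sum_congr rfl (fun i _ => this i)]
    simp only [Finset.sum_const, Finset.card_univ, Fintype.card_fin, nsmul_eq_mul]
    push_cast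
    ring
  rw [hsum2] at hM
  rw [ge_iff_le, div_le_iff₀ hd0] at *
  nlinarith [hM, hd0]
end
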